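/- Let μ be a Borel probability measure on ℝ^k with compact support A* containing infinitely many points, r ∈ (0,∞), and let A_n be an n-optimal set of order r for μ. Define ‖A_n‖_∞ = max_{a ∈ A_n} max_{x ∈ W(a|A_n) ∩ A*} ρ(x,a), where W(a|A_n) is the Voronoi region of a. Then (‖A_n‖_∞ / 2)^r · min_{x ∈ A*} μ(B(x, ‖A_n‖_∞/2)) ≤ V_{n,r}(μ). -/

import Mathlib

open scoped Classical
open MeasureTheory Metric

/-- the `n`-th quantization error of order `r` of a measure on ℝ^k. -/
noncomputable def quantErr {k : ℕ} (μ : Measure (EuclideanSpace ℝ (Fin k)))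
    (n : ℕ) (r : ℝ) : ℝ :=
  sInf {v | ∃ A : Finset (EuclideanSpace ℝ (Fin k)), A.Nonempty ∧ A.card ≤ n ∧
    v = ∫ x, Metric.infDist x ↑A ^ r ∂μ}

/-- Voronoi region of `a` in `A`. -/
def voronoi {k : ℕ} (a : EuclideanSpace ℝ (Fin k))
    (A : Finset (EuclideanSpace ℝ (Fin k))) : Set (EuclideanSpace ℝ (Fin k)) :=
  {x | dist x a = Metric.infDist x ↑A}

theorem stmt6 {k : ℕ} (μ : Measure (EuclideanSpace ℝ (Fin k)))
    [IsProbabilityMeasure μ] (r : ℝ) (hr : 0 < r)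
    (Astar : Set (EuclideanSpace ℝ (Fin k)))
    (hAc : IsCompact Astar) (hAinf : Astar.Infinite)
    (hAfull : μ Astarᶜ = 0)
    (hAmin : ∀ F : Set (EuclideanSpace ℝ (Fin k)), IsClosed F → μ Fᶜ = 0 → Astar ⊆ F)
    (n : ℕ) (A : Finset (EuclideanSpace ℝ (Fin k))) (hA : A.Nonempty)
    (hcard : A.card ≤ n)
    (hopt : ∫ x, Metric.infDist x ↑A ^ r ∂μ = quantErr μ n r)
    (hnorm : ℝ)
    (hhnorm : hnorm = sSup {d | ∃ a ∈ A, ∃ x ∈ voronoi a A ∩ Astar, d = dist x a}) :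
    (hnorm / 2) ^ r *
        sInf ((fun x => (μ (Metric.closedBall x (hnorm / 2))).toReal) '' Astar) ≤
      quantErr μ n r := by

  rw [← hopt]
  have hAstar_ne : Astar.Nonempty := hAinf.nonempty
  have hAcoe : IsCompact (↑A : Set (EuclideanSpace ℝ (Fin k))) := A.finite_toSet.isCompact
  have hAne : (↑A : Set (EuclideanSpace ℝ (Fin k))).Nonempty := hA
  set g := fun x : EuclideanSpace ℝ (Fin k) => Metric.infDist x (↑A : Set _) with hgdef
  have hS : {d | ∃ a ∈ A, ∃ x ∈ voronoi a A ∩ Astar, d = dist x a} = g '' Astar := by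
    ext d
    constructor
    · rintro ⟨a, ha, x, ⟨hv, hx⟩, rfl⟩
      exact ⟨x, hx, hv.symm⟩
    · rintro ⟨x, hx, rfl⟩
      obtain ⟨a, ha, hd⟩ := hAcoe.exists_infDist_eq_dist hAne x
      exact ⟨a, ha, x, ⟨hd.symm, hx⟩, hd⟩
  have hgc : Continuous g := continuous_infDist_pt _
  have himg : IsCompact (g '' Astar) := hAc.image hgc
  have hmem : hnorm ∈ g '' Astar := by
    rw [hhnorm, hS]
    exact himg.sSup_mem (hAstar_ne.image g)
  obtain ⟨x₀, hx₀, hx₀d⟩ := hmem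
  have hnorm_nonneg : 0 ≤ hnorm := hx₀d ▸ Metric.infDist_nonneg
  set e := hnorm / 2 with he
  have he0 : 0 ≤ e := by positivity
  have hball : ∀ y ∈ Metric.closedBall x₀ e, e ≤ g y := by
    intro y hy
    have h1 : g x₀ ≤ g y + dist x₀ y := Metric.infDist_le_infDist_add_dist
    have h2 : dist x₀ y ≤ e := by
      rw [dist_comm]; exact Metric.mem_closedBall.mp hy
    rw [hx₀d] at h1
    linarith
  -- integrability
  set f := fun x : EuclideanSpace ℝ (Fin k) => Metric.infDist x (↑A : Set _) ^ r with hfdef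
  have hfc : Continuous f := by
    apply continuous_iff_continuousAt.mpr
    intro x
    exact (Real.continuousAt_rpow_const _ _ (Or.inr hr.le)).comp hgc.continuousAt
  have hfnn : ∀ x, 0 ≤ f x := fun x => Real.rpow_nonneg Metric.infDist_nonneg r
  obtain ⟨C, hC⟩ := hAc.exists_bound_of_continuousOn hfc.continuousOn
  have hae : ∀ᵐ x ∂μ, x ∈ Astar := by
    rw [MeasureTheory.ae_iff]
    exact hAfull
  have hint : Integrable f μ := by
    refine Integrable.mono' (integrable_const C) hfc.aestronglyMeasurable ?_
    exact hae.mono fun x hx => hC x hx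
  have hBint : (μ (Metric.closedBall x₀ e)).toReal ≤ (μ (Metric.closedBall x₀ e)).toReal := le_rfl
  calc e ^ r * sInf ((fun x => (μ (Metric.closedBall x e)).toReal) '' Astar)
      ≤ e ^ r * (μ (Metric.closedBall x₀ e)).toReal := by
        refine mul_le_mul_of_nonneg_left ?_ (Real.rpow_nonneg he0 r)
        refine csInf_le ⟨0, ?_⟩ ⟨x₀, hx₀, rfl⟩
        rintro v ⟨x, -, rfl⟩
        exact ENNReal.toReal_nonneg
    _ = ∫ _ in Metric.closedBall x₀ e, e ^ r ∂μ := by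
        rw [MeasureTheory.setIntegral_const, smul_eq_mul, mul_comm]
        rfl
    _ ≤ ∫ y in Metric.closedBall x₀ e, f y ∂μ := by
        refine MeasureTheory.setIntegral_mono_on ?_ hint.integrableOn
          measurableSet_closedBall ?_
        · exact (MeasureTheory.integrableOn_const_iff).mpr (Or.inr (measure_lt_top μ _))
        · intro y hy
          exact Real.rpow_le_rpow he0 (hball y hy) hr.le
    _ ≤ ∫ y, f y ∂μ :=
        MeasureTheory.setIntegral_le_integral hint (Filter.Eventually.of_forall hfnn)
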